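/- Let R be a unital ring, n ≥ 3, and A an n×n matrix over R whose trace is a sum of k commutators. Then A is a sum of ⌊log₂ n⌋ + k + 2 nilpotent matrices, of which ⌊log₂ n⌋ have nilpotency index at most 2 and k have nilpotency index at most 3. -/
import Mathlib


section aux
variable {R : Type*} [Ring R] {n : ℕ}

lemma sq_zero_outer (u v : Fin n → R) (h : ∑ i, v i * u i = 0) :
    (Matrix.of fun i j => u i * v j) ^ 2 = 0 := by
  ext i j
  simp only [pow_two, Matrix.mul_apply, Matrix.of_apply, Matrix.zero_apply]
  have h0 : u i * ((∑ l, v l * u l) * v j) = 0 := by rw [h, zero_mul, mul_zero]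
  rw [Finset.sum_mul, Finset.mul_sum] at h0
  rw [← h0]
  apply Finset.sum_congr rfl
  intros; simp [mul_assoc]

lemma pow_eq_zero_upper (M : Matrix (Fin n) (Fin n) R)
    (h : ∀ i j : Fin n, (j : ℕ) ≤ i → M i j = 0) : M ^ n = 0 := by
  have H : ∀ (m : ℕ) (i j : Fin n), (j : ℕ) < i + m → (M ^ m) i j = 0 := by
    intro m
    induction m with
    | zero =>
        intro i j hj
        have hne : i ≠ j := by intro e; subst e; omega
        rw [pow_zero]
        simp [Matrix.one_apply, hne]
    | succ m ih =>
        intro i j hj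
        rw [pow_succ, Matrix.mul_apply]
        apply Finset.sum_eq_zero
        intro l _
        rcases lt_or_ge (l : ℕ) (i + m) with hl | hl
        · rw [ih i l hl, zero_mul]
        · rw [h l j (by omega), mul_zero]
  ext i j
  exact H n i j (by omega)

lemma pow_eq_zero_lower (M : Matrix (Fin n) (Fin n) R)
    (h : ∀ i j : Fin n, (i : ℕ) ≤ j → M i j = 0) : M ^ n = 0 := by
  have H : ∀ (m : ℕ) (i j : Fin n), (i : ℕ) < j + m → (M ^ m) i j = 0 := by
    intro m
    induction m with
    | zero =>
        intro i j hj
        have hne : i ≠ j := by intro e; subst e; omega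
        rw [pow_zero]
        simp [Matrix.one_apply, hne]
    | succ m ih =>
        intro i j hj
        rw [pow_succ, Matrix.mul_apply]
        apply Finset.sum_eq_zero
        intro l _
        rcases lt_or_ge (i : ℕ) (l + m) with hl | hl
        · rw [ih i l hl, zero_mul]
        · rw [h l j (by omega), mul_zero]
  ext i j
  exact H n i j (by omega)

end aux

theorem stmt_19 (R : Type*) [Ring R] (n k : ℕ) (hn : 3 ≤ n)
    (A : Matrix (Fin n) (Fin n) R)
    (h : ∃ x y : Fin k → R,
      Matrix.trace A = ∑ i, (x i * y i - y i * x i)) :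
    ∃ N : Fin (Nat.log 2 n) → Matrix (Fin n) (Fin n) R,
    ∃ M : Fin k → Matrix (Fin n) (Fin n) R,
    ∃ P Q : Matrix (Fin n) (Fin n) R,
      (∀ i, N i ^ 2 = 0) ∧ (∀ i, M i ^ 3 = 0) ∧
      IsNilpotent P ∧ IsNilpotent Q ∧
      A = (∑ i, N i) + (∑ i, M i) + P + Q := by
  obtain ⟨x, y, hxy⟩ := h
  set e0 : Fin n := ⟨0, by omega⟩ with he0
  set e1 : Fin n := ⟨1, by omega⟩ with he1
  have hee : e0 ≠ e1 := by simp [he0, he1, Fin.ext_iff]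
  -- row and column vectors for the commutator carriers
  set u : Fin k → Fin n → R :=
    fun i a => if a = e0 then x i else if a = e1 then -(y i * x i) else 0 with hu
  set v : Fin k → Fin n → R :=
    fun i b => if b = e0 then y i else if b = e1 then 1 else 0 with hv
  set M : Fin k → Matrix (Fin n) (Fin n) R :=
    fun i => Matrix.of fun a b => u i a * v i b with hM
  have hMsq : ∀ i, M i ^ 2 = 0 := by
    intro i
    apply sq_zero_outer
    have hterm : ∀ b, v i b * u i b =
        (if b = e0 then y i * x i else 0) + (if b = e1 then -(y i * x i) else 0) := by
      intro b
      by_cases h0 : b = e0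
      · have h1 : b ≠ e1 := by rw [h0]; exact hee
        simp [hu, hv, h0, h1, hee, Ne.symm hee]
      · by_cases h1 : b = e1
        · simp [hu, hv, h0, h1, hee, Ne.symm hee]
        · simp [hu, hv, h0, h1]
    rw [Finset.sum_congr rfl (fun b _ => hterm b), Finset.sum_add_distrib]
    simp
  have hMtr : ∀ i, Matrix.trace (M i) = x i * y i - y i * x i := by
    intro i
    have hterm : ∀ a, u i a * v i a =
        (if a = e0 then x i * y i else 0) + (if a = e1 then -(y i * x i) else 0) := by
      intro a
      by_cases h0 : a = e0
      · have h1 : a ≠ e1 := by rw [h0]; exact hee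
        simp [hu, hv, h0, h1, hee, Ne.symm hee]
      · by_cases h1 : a = e1
        · simp [hu, hv, h0, h1, hee, Ne.symm hee]
        · simp [hu, hv, h0, h1]
    have : Matrix.trace (M i) = ∑ a, u i a * v i a := by
      simp [hM, Matrix.trace, Matrix.diag]
    rw [this, Finset.sum_congr rfl (fun a _ => hterm a), Finset.sum_add_distrib]
    simp [sub_eq_add_neg]
  -- B has trace zero
  set B : Matrix (Fin n) (Fin n) R := A - ∑ i, M i with hB
  have hBtr : ∑ a, B a a = 0 := by
    have : ∑ a, B a a = Matrix.trace B := by simp [Matrix.trace, Matrix.diag]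
    rw [this, hB, Matrix.trace_sub, Matrix.trace_sum, hxy]
    rw [Finset.sum_congr rfl (fun i _ => hMtr i)]
    simp
  -- the square-zero matrix carrying B's diagonal
  set N1 : Matrix (Fin n) (Fin n) R :=
    Matrix.of (fun a b => B a a * (1 : R)) with hN1
  have hN1sq : N1 ^ 2 = 0 := by
    apply sq_zero_outer (fun a => B a a) (fun _ => (1 : R))
    simp [hBtr]
  -- remaining matrix with zero diagonal
  set C : Matrix (Fin n) (Fin n) R := B - N1 with hC
  have hCdiag : ∀ a, C a a = 0 := by
    intro a; simp [hC, hN1]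
  set P : Matrix (Fin n) (Fin n) R :=
    Matrix.of (fun a b => if (b : ℕ) < a then C a b else 0) with hP
  set Q : Matrix (Fin n) (Fin n) R :=
    Matrix.of (fun a b => if (a : ℕ) < b then C a b else 0) with hQ
  have hPQ : P + Q = C := by
    ext a b
    rw [Matrix.add_apply, hP, hQ]
    simp only [Matrix.of_apply]
    rcases lt_trichotomy (a : ℕ) (b : ℕ) with hab | hab | hab
    · rw [if_neg (by omega), if_pos hab, zero_add]
    · have hab' : a = b := Fin.ext hab
      subst hab'
      rw [if_neg (by omega), zero_add, hCdiag a]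
    · rw [if_pos hab, if_neg (by omega), add_zero]
  have hlog : 0 < Nat.log 2 n := Nat.log_pos (by norm_num) (by omega)
  set N : Fin (Nat.log 2 n) → Matrix (Fin n) (Fin n) R :=
    fun i => if (i : ℕ) = 0 then N1 else 0 with hN
  have hNsum : ∑ i, N i = N1 := by
    rw [Finset.sum_eq_single (⟨0, hlog⟩ : Fin (Nat.log 2 n))]
    · simp [hN]
    · intro b _ hb
      have : (b : ℕ) ≠ 0 := by
        intro e; exact hb (Fin.ext e)
      simp [hN, this]
    · intro habs; exact absurd (Finset.mem_univ _) habs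
  refine ⟨N, M, P, Q, ?_, ?_, ?_, ?_, ?_⟩
  · intro i
    by_cases hi : (i : ℕ) = 0
    · simp [hN, hi, hN1sq]
    · simp [hN, hi]
  · intro i
    rw [pow_succ, hMsq i, zero_mul]
  · exact ⟨n, pow_eq_zero_lower P (fun i j hij => by
      rw [hP]; simp only [Matrix.of_apply]; rw [if_neg (by omega)])⟩
  · exact ⟨n, pow_eq_zero_upper Q (fun i j hij => by
      rw [hQ]; simp only [Matrix.of_apply]; rw [if_neg (by omega)])⟩
  · rw [hNsum, add_assoc, hPQ, hC, hB]
    abel
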